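/- The quotient of a Wheeler DFA A by the right-invariant equivalence ≡ (collapsing maximal runs of Wheeler-consecutive, same-incoming-label, Myhill-Nerode-equivalent states) recognizes the same language as A: L(A/≡) = L(A). -/
import Mathlib


/-- A Wheeler DFA over a linearly ordered state set `Q` (the Wheeler order)
and a linearly ordered alphabet `A`.  The transition function is partial
(`Option`-valued).  The three Wheeler axioms are part of the structure. -/
structure WDFA (Q A : Type) [LinearOrder Q] [LinearOrder A] where
  delta : Q → A → Option Q
  start : Q
  F : Set Q
  /-- Wheeler axiom (i): the initial state is minimum. -/
  start_le : ∀ u, start ≤ u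
  /-- Wheeler axiom (ii). -/
  w2 : ∀ {u v : Q} {a b : A} {u' v' : Q},
      delta u a = some u' → delta v b = some v' → a < b → u' < v'
  /-- Wheeler axiom (iii). -/
  w3 : ∀ {u v : Q} {a : A} {u' v' : Q},
      delta u a = some u' → delta v a = some v' → u < v → u' ≤ v'

namespace WDFA

variable {Q A : Type} [LinearOrder Q] [LinearOrder A]

/-- Extension of the (partial) transition function to strings. -/
def dhat (M : WDFA Q A) : Q → List A → Option Q
  | q, [] => some q
  | q, a :: w => (M.delta q a).bind (fun p => M.dhat p w)

/-- `q` accepts the string `w`. -/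
def Acc (M : WDFA Q A) (q : Q) (w : List A) : Prop :=
  ∃ p, M.dhat q w = some p ∧ p ∈ M.F

/-- Set of labels of outgoing edges of `q`. -/
def out (M : WDFA Q A) (q : Q) : Set A := {a | (M.delta q a).isSome}

/-- Myhill–Nerode state equivalence (with equal domains of definition). -/
def MN (M : WDFA Q A) (u v : Q) : Prop :=
  ∀ w : List A, (M.dhat u w).isSome = (M.dhat v w).isSome ∧ (M.Acc u w ↔ M.Acc v w)

/-- Myhill–Nerode state equivalence, acceptance-only version
(undefined counts as rejecting). -/
def MNacc (M : WDFA Q A) (u v : Q) : Prop :=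
  ∀ w : List A, M.Acc u w ↔ M.Acc v w

/-- `u` and `v` are adjacent in the Wheeler order. -/
def Adj (M : WDFA Q A) (u v : Q) : Prop :=
  u < v ∧ ∀ w : Q, ¬ (u < w ∧ w < v)

/-- `lam` is the incoming-label map: `lam start = ⊥` (the special symbol `#`)
and every transition entering `v` is labelled `lam v`. -/
def HasLam (M : WDFA Q A) (lam : Q → WithBot A) : Prop :=
  lam M.start = ⊥ ∧ ∀ u a v, M.delta u a = some v → lam v = (a : WithBot A)

/-- Every non-initial state has an incoming transition (reachability). -/
def Reach1 (M : WDFA Q A) : Prop :=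
  ∀ u, u ≠ M.start → ∃ p a, M.delta p a = some u

/-- Every state accepts some string (is final or reaches a final state). -/
def Coacc (M : WDFA Q A) : Prop := ∀ u, ∃ w, M.Acc u w

/-- The minimum-WDFA equivalence `≡`: `u` and `v` have the same incoming
label, are Myhill–Nerode equivalent, and so is every state between them in
the Wheeler order. -/
def Equ (M : WDFA Q A) (lam : Q → WithBot A) (u v : Q) : Prop :=
  lam u = lam v ∧ M.MN u v ∧
    ∀ w, min u v ≤ w → w ≤ max u v → lam w = lam u ∧ M.MN w u

/-- `(u,v)` is a node of the border graph: adjacent states with equal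
incoming labels. -/
def IsBorder (M : WDFA Q A) (lam : Q → WithBot A) (u v : Q) : Prop :=
  M.Adj u v ∧ lam u = lam v

/-- Edge relation of the border graph `B(A)`: there is an edge from the
border `x` to the border `y` whenever `x.1 = δ(y.1, λ(x.1))` and
`x.2 = δ(y.2, λ(x.1))`. -/
def EdgeZ (M : WDFA Q A) (lam : Q → WithBot A) : Q × Q → Q × Q → Prop :=
  fun x y => M.IsBorder lam x.1 x.2 ∧ M.IsBorder lam y.1 y.2 ∧
    ∃ a : A, lam x.1 = (a : WithBot A) ∧
      M.delta y.1 a = some x.1 ∧ M.delta y.2 a = some x.2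

/-- Transition function of the quotient automaton `A/st`
(`δ([u],a) = [δ(u,a)]`, implemented via representatives). -/
noncomputable def qdelta (M : WDFA Q A) (st : Setoid Q) (c : Quotient st) (a : A) :
    Option (Quotient st) :=
  (M.delta (Quotient.out c) a).map (Quotient.mk st)

/-- String extension of the quotient transition function. -/
noncomputable def qdhat (M : WDFA Q A) (st : Setoid Q) : Quotient st → List A → Option (Quotient st)
  | c, [] => some c
  | c, a :: w => (M.qdelta st c a).bind (fun d => M.qdhat st d w)

/-- The quotient automaton accepts `w`. -/
def qAcc (M : WDFA Q A) (st : Setoid Q) (w : List A) : Prop :=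
  ∃ c, M.qdhat st (Quotient.mk st M.start) w = some c ∧
    ∃ u ∈ M.F, Quotient.mk st u = c

/-- Order induced on `≡`-classes by the Wheeler order (classes are
intervals, so comparing arbitrary representatives is well defined). -/
def qle (st : Setoid Q) (c d : Quotient st) : Prop :=
  c = d ∨ ∀ u v : Q, Quotient.mk st u = c → Quotient.mk st v = d → u < v

end WDFA

/-- the quotient of a Wheeler DFA by `≡` recognizes the same
language. -/
private lemma wdfa_quotient_key {Q A : Type} [LinearOrder Q] [LinearOrder A]
    (M : WDFA Q A) (st : Setoid Q)
    (hMN : ∀ u v : Q, st.r u v → M.MN u v) :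
    ∀ (w : List A) (u : Q),
      (∃ c, M.qdhat st (Quotient.mk st u) w = some c ∧
        ∃ f ∈ M.F, Quotient.mk st f = c) ↔ M.Acc u w := by
  intro w
  induction w with
  | nil =>
    intro u
    constructor
    · rintro ⟨c, hc, f, hf, hfc⟩
      simp only [WDFA.qdhat, Option.some.injEq] at hc
      subst hc
      have : st.r f u := Quotient.exact hfc
      exact ((hMN f u this []).2).1 ⟨f, rfl, hf⟩
    · rintro ⟨p, hp, hpf⟩
      simp only [WDFA.dhat, Option.some.injEq] at hp
      subst hp
      exact ⟨Quotient.mk st u, rfl, u, hpf, rfl⟩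
  | cons a w ih =>
    intro u
    set r := (Quotient.mk st u).out with hr
    have hru : st.r r u := Quotient.mk_out u
    have hMNru := hMN r u hru
    have hacc : M.Acc r (a :: w) ↔ M.Acc u (a :: w) := (hMNru (a :: w)).2
    have hsome := (hMNru (a :: w)).1
    constructor
    · rintro ⟨c, hc, f, hf, hfc⟩
      simp only [WDFA.qdhat, WDFA.qdelta, ← hr] at hc
      cases hd : M.delta r a with
      | none => rw [hd] at hc; simp at hc
      | some p =>
        rw [hd] at hc
        simp only [Option.map_some, Option.bind_some] at hc
        have : M.Acc p w := (ih p).1 ⟨c, hc, f, hf, hfc⟩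
        obtain ⟨q, hq, hqf⟩ := this
        refine hacc.1 ⟨q, ?_, hqf⟩
        simp [WDFA.dhat, hd, hq]
    · intro hu
      have hraw : M.Acc r (a :: w) := hacc.2 hu
      obtain ⟨q, hq, hqf⟩ := hraw
      simp only [WDFA.dhat] at hq
      cases hd : M.delta r a with
      | none => rw [hd] at hq; simp at hq
      | some p =>
        rw [hd] at hq
        simp only [Option.bind_some] at hq
        have : M.Acc p w := ⟨q, hq, hqf⟩
        obtain ⟨c, hc, f, hf, hfc⟩ := (ih p).2 this
        refine ⟨c, ?_, f, hf, hfc⟩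
        simp [WDFA.qdhat, WDFA.qdelta, ← hr, hd, hc]

/-- the quotient of a Wheeler DFA by `≡` recognizes the same
language. -/
theorem wdfa_quotient_language {Q A : Type} [LinearOrder Q] [LinearOrder A]
    (M : WDFA Q A) (lam : Q → WithBot A) (hlam : M.HasLam lam)
    (hreach : M.Reach1) (st : Setoid Q)
    (hst : ∀ u v : Q, st.r u v ↔ M.Equ lam u v) :
    ∀ w : List A, M.qAcc st w ↔ M.Acc M.start w := by
  have hMN : ∀ u v : Q, st.r u v → M.MN u v := fun u v h => ((hst u v).1 h).2.1
  intro w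
  exact wdfa_quotient_key M st hMN w M.start
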